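/- The functional Tr is a tracial, factorizing, reflection-invariant state: (a) Tr(1) = 1; (b) Tr(A*A) ≥ 0 for all A ∈ 𝔄, with equality only for A = 0; (c) Tr(AB) = Tr(BA) for all A, B ∈ 𝔄; (d) Tr(Θ(A)) = conj(Tr(A)) for all A ∈ 𝔄; (e) Tr(A₋·A₊) = Tr(A₋)·Tr(A₊) for all A₋ ∈ 𝔄₋ and A₊ ∈ 𝔄₊. -/

import Mathlib

open ComplexOrder

noncomputable section

/-- The setting of the paper: a finite set `Λ` with a fixed-point free involution `ϑ`
exchanging `Λp` and its complement, the Clifford algebra (algebra of Majoranas) `carrier`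
with self-adjoint generators `c i`, the global gauge automorphism `gauge`, the antilinear
reflection `*`-automorphism `Θ`, a square root `ζ` of `-1`, the twisted product `twist`,
a choice `P` of orderings of the subsets of `Λp` (giving the bases
`{C J : J ∈ P}` of `𝔄₊` and `{Θ(C J) ∘ C J' : J, J' ∈ P}` of `𝔄`),
and the tracial state `Tr` picking out the coefficient of `1` in the basis expansion. -/
structure MajoranaSetting where
  Λ : Type
  [fintypeΛ : Fintype Λ]
  [deceqΛ : DecidableEq Λ]
  ϑ : Λ → Λ
  ϑ_invol : Function.Involutive ϑ
  ϑ_fixfree : ∀ i, ϑ i ≠ i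
  Λp : Finset Λ
  ϑ_exch : ∀ i, i ∈ Λp ↔ ϑ i ∉ Λp
  carrier : Type
  [nring : NormedRing carrier]
  [nalg : NormedAlgebra ℂ carrier]
  [cmpl : CompleteSpace carrier]
  [starring : StarRing carrier]
  [starmod : StarModule ℂ carrier]
  c : Λ → carrier
  c_star : ∀ i, star (c i) = c i
  clifford : ∀ i j, c i * c j + c j * c i = if i = j then (2 : carrier) else 0
  gauge : carrier ≃ₐ[ℂ] carrier
  gauge_c : ∀ i, gauge (c i) = - c i
  Θ : carrier → carrier
  Θ_add : ∀ x y, Θ (x + y) = Θ x + Θ y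
  Θ_smul : ∀ (z : ℂ) (x), Θ (z • x) = (starRingEnd ℂ z) • Θ x
  Θ_mul : ∀ x y, Θ (x * y) = Θ x * Θ y
  Θ_star : ∀ x, Θ (star x) = star (Θ x)
  Θ_invol : ∀ x, Θ (Θ x) = x
  Θ_c : ∀ i, Θ (c i) = c (ϑ i)
  ζ : ℂ
  ζ_sq : ζ ^ 2 = -1
  twist : carrier → carrier → carrier
  twist_add_left : ∀ x x' y, twist (x + x') y = twist x y + twist x' y
  twist_add_right : ∀ x y y', twist x (y + y') = twist x y + twist x y'
  twist_smul_left : ∀ (z : ℂ) (x y), twist (z • x) y = z • twist x y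
  twist_smul_right : ∀ (z : ℂ) (x y), twist x (z • y) = z • twist x y
  twist_spec : ∀ (Am Ap Bm Bp : carrier) (a b a' b' : ℕ),
    a ≤ 1 → b ≤ 1 → a' ≤ 1 → b' ≤ 1 →
    Am ∈ Algebra.adjoin ℂ (c '' {i | i ∉ Λp}) →
    Ap ∈ Algebra.adjoin ℂ (c '' {i | i ∈ Λp}) →
    Bm ∈ Algebra.adjoin ℂ (c '' {i | i ∉ Λp}) →
    Bp ∈ Algebra.adjoin ℂ (c '' {i | i ∈ Λp}) →
    gauge Am = ((-1 : ℂ) ^ a) • Am →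
    gauge Ap = ((-1 : ℂ) ^ b) • Ap →
    gauge Bm = ((-1 : ℂ) ^ a') • Bm →
    gauge Bp = ((-1 : ℂ) ^ b') • Bp →
    twist (Am * Ap) (Bm * Bp)
      = ζ ^ ((a * b' : ℤ) - (b * a' : ℤ)) • (Am * Ap * (Bm * Bp))
  P : Finset (List Λ)
  P_nodup : ∀ J ∈ P, J.Nodup
  P_sub : ∀ J ∈ P, ∀ i ∈ J, i ∈ Λp
  P_unique : ∀ s : Finset Λ, s ⊆ Λp → ∃! J, J ∈ P ∧ J.toFinset = s
  Tr : carrier →ₗ[ℂ] ℂ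
  Tr_basis : ∀ J ∈ P, ∀ J' ∈ P,
    Tr (twist (Θ ((J.map c).prod)) ((J'.map c).prod))
      = if J = [] ∧ J' = [] then 1 else 0
  basis_indep : LinearIndependent ℂ
    (fun p : {J // J ∈ P} × {J // J ∈ P} =>
      twist (Θ ((p.1.1.map c).prod)) ((p.2.1.map c).prod))
  basis_span : ∀ x : carrier, x ∈ Submodule.span ℂ
    (Set.range fun p : {J // J ∈ P} × {J // J ∈ P} =>
      twist (Θ ((p.1.1.map c).prod)) ((p.2.1.map c).prod))
  plus_span : ∀ x ∈ Algebra.adjoin ℂ (c '' {i | i ∈ Λp}),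
    x ∈ Submodule.span ℂ (Set.range fun J : {J // J ∈ P} => ((J.1.map c).prod))

attribute [instance] MajoranaSetting.fintypeΛ MajoranaSetting.deceqΛ
  MajoranaSetting.nring MajoranaSetting.nalg MajoranaSetting.cmpl
  MajoranaSetting.starring MajoranaSetting.starmod

namespace MajoranaSetting

variable (S : MajoranaSetting)

/-- The subalgebra `𝔄₊` generated by the Majoranas on the `+` side. -/
def Aplus : Subalgebra ℂ S.carrier := Algebra.adjoin ℂ (S.c '' {i | i ∈ S.Λp})

/-- The subalgebra `𝔄₋` generated by the Majoranas on the `-` side. -/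
def Aminus : Subalgebra ℂ S.carrier := Algebra.adjoin ℂ (S.c '' {i | i ∉ S.Λp})

/-- The monomial `C_𝔍 = c_{i₁} ⋯ c_{i_k}`. -/
def C (J : List S.Λ) : S.carrier := (J.map S.c).prod

/-- `q_𝔍 = (-1)^{k(k-1)/2}`. -/
def q (J : List S.Λ) : ℂ := (-1 : ℂ) ^ (J.length * (J.length - 1) / 2)

/-- `s_𝔍 = ζ^{k(k-1)/2}`. -/
def sgn (J : List S.Λ) : ℂ := S.ζ ^ (J.length * (J.length - 1) / 2)

/-- The exponential `e^x` in the (finite-dimensional) algebra `𝔄`. -/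
def expm (x : S.carrier) : S.carrier := NormedSpace.exp x

/-- The Hamiltonian `H = -∑_{𝔍,𝔍' ∈ 𝒫₊} J_{𝔍𝔍'} Θ(C_𝔍) ∘ C_𝔍'`
determined by coupling constants `Jc`. -/
def Ham (Jc : List S.Λ → List S.Λ → ℂ) : S.carrier :=
  - ∑ J ∈ S.P, ∑ J' ∈ S.P, Jc J J' • S.twist (S.Θ (S.C J)) (S.C J')

/-- The index type of the basis `{C J : J ∈ 𝒫₊}`. -/
abbrev PIdx := {J : List S.Λ // J ∈ S.P}

/-- The index type `𝒫₊ - {∅}` of couplings across the reflection plane. -/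
abbrev PIdx0 := {p : S.PIdx // p.1 ≠ []}

/-- The full matrix of coupling constants. -/
def Jmat (Jc : List S.Λ → List S.Λ → ℂ) : Matrix S.PIdx S.PIdx ℂ :=
  Matrix.of fun p q => Jc p.1 q.1

/-- The matrix `J⁰` of coupling constants across the reflection plane. -/
def Jmat0 (Jc : List S.Λ → List S.Λ → ℂ) : Matrix S.PIdx0 S.PIdx0 ℂ :=
  Matrix.of fun p q => Jc p.1.1 q.1.1

end MajoranaSetting

namespace MajoranaSetting

variable (S : MajoranaSetting)

lemma C_nil : S.C ([] : List S.Λ) = 1 := rfl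

lemma C_cons (i : S.Λ) (T : List S.Λ) : S.C (i :: T) = S.c i * S.C T := by
  simp [C, List.prod_cons]

lemma C_append (X Y : List S.Λ) : S.C (X ++ Y) = S.C X * S.C Y := by
  simp [C, List.prod_append]

lemma c_sq (i : S.Λ) : S.c i * S.c i = 1 := by
  have h := S.clifford i i
  simp only [if_pos rfl] at h
  have h2 : (2:ℂ) • (S.c i * S.c i) = (2:ℂ) • (1 : S.carrier) := by
    rw [two_smul, two_smul]
    rw [h]
    norm_num
  have := smul_right_injective S.carrier (by norm_num : (2:ℂ) ≠ 0) h2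
  exact this

lemma c_anticomm {i j : S.Λ} (h : i ≠ j) : S.c i * S.c j = - (S.c j * S.c i) := by
  have hc := S.clifford i j
  rw [if_neg h] at hc
  exact eq_neg_of_add_eq_zero_left hc

lemma Θ_one : S.Θ 1 = 1 := by
  have h : S.Θ (S.Θ 1 * 1) = S.Θ (S.Θ 1) := by rw [mul_one]
  rw [S.Θ_mul, S.Θ_invol, one_mul] at h
  exact h

lemma Θ_C (X : List S.Λ) : S.Θ (S.C X) = S.C (X.map S.ϑ) := by
  induction X with
  | nil => simpa [C_nil] using S.Θ_one
  | cons i T ih => rw [C_cons, S.Θ_mul, S.Θ_c, ih, List.map_cons, C_cons]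

lemma gauge_C (X : List S.Λ) : S.gauge (S.C X) = ((-1:ℂ) ^ X.length) • S.C X := by
  induction X with
  | nil => simp [C_nil]
  | cons i T ih =>
      rw [C_cons, map_mul, S.gauge_c, ih, List.length_cons]
      rw [pow_succ, neg_mul, mul_smul_comm, mul_comm ((-1:ℂ)^T.length) (-1),
        mul_smul, neg_one_smul]

lemma star_C (X : List S.Λ) : star (S.C X) = S.C X.reverse := by
  induction X with
  | nil => simp [C_nil]
  | cons i T ih =>
      rw [C_cons, star_mul, ih, S.c_star, List.reverse_cons, C_append]
      simp [C_cons, C_nil]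

lemma C_rev_mul_C (X : List S.Λ) : S.C X.reverse * S.C X = 1 := by
  induction X with
  | nil => simp [C_nil]
  | cons i T ih =>
      simp only [List.reverse_cons, C_append, C_cons, C_nil, mul_one]
      rw [mul_assoc, ← mul_assoc (S.c i), S.c_sq, one_mul, ih]

lemma C_mem_plus {X : List S.Λ} (h : ∀ i ∈ X, i ∈ S.Λp) : S.C X ∈ S.Aplus := by
  induction X with
  | nil => exact (S.Aplus).one_mem
  | cons i T ih =>
      rw [C_cons]
      exact mul_mem (Algebra.subset_adjoin ⟨i, h i (by simp), rfl⟩)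
        (ih fun j hj => h j (by simp [hj]))

lemma C_mem_minus {X : List S.Λ} (h : ∀ i ∈ X, i ∉ S.Λp) : S.C X ∈ S.Aminus := by
  induction X with
  | nil => exact (S.Aminus).one_mem
  | cons i T ih =>
      rw [C_cons]
      exact mul_mem (Algebra.subset_adjoin ⟨i, h i (by simp), rfl⟩)
        (ih fun j hj => h j (by simp [hj]))

end MajoranaSetting
namespace MajoranaSetting

variable (S : MajoranaSetting)

/-- Moving a single Majorana through a block of distinct Majoranas. -/
lemma c_move {i : S.Λ} {U : List S.Λ} (h : ∀ j ∈ U, i ≠ j) :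
    S.c i * S.C U = ((-1:ℂ) ^ U.length) • (S.C U * S.c i) := by
  induction U with
  | nil => simp [C_nil]
  | cons j T ih =>
      have hij : i ≠ j := h j (by simp)
      rw [C_cons, ← mul_assoc, S.c_anticomm hij, neg_mul, mul_assoc,
        ih (fun k hk => h k (by simp [hk])), List.length_cons, pow_succ]
      rw [mul_smul_comm, mul_comm ((-1:ℂ)^T.length) (-1), mul_smul, neg_one_smul, mul_assoc]

/-- Sign of a permutation of distinct Majoranas. -/
lemma C_perm {X Y : List S.Λ} (hp : X.Perm Y) (hn : X.Nodup) :
    ∃ n : ℕ, S.C X = ((-1:ℂ) ^ n) • S.C Y := by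
  induction X generalizing Y with
  | nil => exact ⟨0, by rw [← hp.nil_eq]; simp⟩
  | cons i T ih =>
      have hiY : i ∈ Y := hp.subset (by simp)
      obtain ⟨U, V, rfl⟩ := List.append_of_mem hiY
      have hp' : (i :: T).Perm (i :: (U ++ V)) := hp.trans List.perm_middle
      have hT : T.Perm (U ++ V) := (List.perm_cons i).mp hp'
      have hnT : T.Nodup := (List.nodup_cons.mp hn).2
      obtain ⟨n, hCT⟩ := ih hT hnT
      have hiUV : i ∉ U ++ V := (List.nodup_cons.mp (hp'.nodup_iff.mp hn)).1
      have hiU : ∀ j ∈ U, i ≠ j := fun j hj e => hiUV (by simp [e ▸ hj])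
      refine ⟨n + U.length, ?_⟩
      rw [C_cons, hCT, mul_smul_comm, C_append, ← mul_assoc, S.c_move hiU,
        smul_mul_assoc, mul_assoc, ← C_cons, ← C_append, smul_smul, ← pow_add]

/-- Reduction of an arbitrary word of Majoranas to a sign times a reduced word. -/
lemma C_reduce (W : List S.Λ) :
    ∃ (n : ℕ) (W' : List S.Λ), W'.Nodup ∧ S.C W = ((-1:ℂ) ^ n) • S.C W' ∧
      (∀ i, i ∈ W' ↔ ¬ 2 ∣ W.count i) := by
  induction W with
  | nil => exact ⟨0, [], by simp [C_nil]⟩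
  | cons a T ih =>
      obtain ⟨n, T', hnd, hC, hcount⟩ := ih
      by_cases ha : a ∈ T'
      · obtain ⟨U, V, rfl⟩ := List.append_of_mem ha
        have h' := hnd
        rw [List.nodup_append] at h'
        obtain ⟨hU1, hAV, hdis⟩ := h'
        have haU : a ∉ U := fun h => hdis a h a (by simp) rfl
        have hav := List.nodup_cons.mp hAV
        have hUV : (U ++ V).Nodup := by
          rw [List.nodup_append]
          exact ⟨hU1, hav.2, fun x hx y hy => hdis x hx y (by simp [hy])⟩
        have hmove : ∀ j ∈ U, a ≠ j := fun j hj e => haU (e ▸ hj)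
        refine ⟨n + U.length, U ++ V, hUV, ?_, ?_⟩
        · have key : S.c a * S.C (U ++ a :: V) = ((-1:ℂ)^U.length) • S.C (U ++ V) := by
            rw [C_append, C_cons, ← mul_assoc, S.c_move hmove, smul_mul_assoc,
              mul_assoc, ← mul_assoc (S.c a), S.c_sq, one_mul, ← C_append]
          rw [C_cons, hC, mul_smul_comm, key, smul_smul, ← pow_add]
        · intro i
          by_cases hia : i = a
          · subst hia
            have hodd : ¬ 2 ∣ T.count i := (hcount i).mp ha
            have hcnt : (i :: T).count i = T.count i + 1 := by simp [List.count_cons]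
            have hmem : i ∉ U ++ V := by simp [List.mem_append, haU, hav.1]
            rw [hcnt]
            simp only [hmem, false_iff]
            omega
          · have hcnt : (a :: T).count i = T.count i := by simp [List.count_cons, hia, Ne.symm hia]
            rw [hcnt, ← hcount i]
            constructor
            · intro h
              rcases List.mem_append.mp h with h' | h' <;> simp [h']
            · intro h
              rcases List.mem_append.mp h with h' | h'
              · exact List.mem_append.mpr (Or.inl h')
              · rcases List.mem_cons.mp h' with h'' | h''
                · exact absurd h'' hia
                · exact List.mem_append.mpr (Or.inr h'')
      · refine ⟨n, a :: T', by simp [List.nodup_cons, ha, hnd], ?_, ?_⟩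
        · rw [C_cons, hC, mul_smul_comm, ← C_cons]
        · intro i
          by_cases hia : i = a
          · subst hia
            have heven : 2 ∣ T.count i := by
              by_contra hcon; exact ha ((hcount i).mpr hcon)
            have hcnt : (i :: T).count i = T.count i + 1 := by simp [List.count_cons]
            simp only [List.mem_cons, true_or, true_iff, hcnt]
            omega
          · have hcnt : (a :: T).count i = T.count i := by simp [List.count_cons, hia, Ne.symm hia]
            simp only [List.mem_cons, hia, false_or, hcnt]
            exact hcount i

end MajoranaSetting
namespace MajoranaSetting

variable (S : MajoranaSetting)

lemma ζ_ne_zero : S.ζ ≠ 0 := by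
  intro h
  have := S.ζ_sq
  rw [h] at this
  norm_num at this

lemma conj_ζ_mul_ζ : (starRingEnd ℂ) S.ζ * S.ζ = 1 := by
  have h : (S.ζ - Complex.I) * (S.ζ + Complex.I) = 0 := by
    have h2 : Complex.I ^ 2 = -1 := Complex.I_sq
    linear_combination S.ζ_sq - h2
  rcases mul_eq_zero.mp h with h' | h'
  · have : S.ζ = Complex.I := by linear_combination h'
    simp [this, Complex.conj_I]
  · have : S.ζ = -Complex.I := by linear_combination h'
    simp [this, Complex.conj_I]

lemma neg_one_pow_mod_two (m : ℕ) : ((-1:ℂ)) ^ (m % 2) = (-1) ^ m := by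
  conv_rhs => rw [← Nat.div_add_mod m 2]
  rw [pow_add, pow_mul]
  norm_num

lemma theta_mem_Λp {i : S.Λ} (h : i ∉ S.Λp) : S.ϑ i ∈ S.Λp := by
  have := (S.ϑ_exch (S.ϑ i))
  rw [S.ϑ_invol i] at this
  exact this.mpr h

lemma theta_not_mem_Λp {i : S.Λ} (h : i ∈ S.Λp) : S.ϑ i ∉ S.Λp :=
  (S.ϑ_exch i).mp h

/-- The basis elements of `𝔄` are signed monomials. -/
lemma E_eq {J J' : List S.Λ} (hJ : ∀ i ∈ J, i ∈ S.Λp) (hJ' : ∀ i ∈ J', i ∈ S.Λp) :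
    S.twist (S.Θ (S.C J)) (S.C J')
      = S.ζ ^ ((J.length % 2) * (J'.length % 2)) • S.C (J.map S.ϑ ++ J') := by
  have hAm : S.C (J.map S.ϑ) ∈ Algebra.adjoin ℂ (S.c '' {i | i ∉ S.Λp}) := by
    apply S.C_mem_minus
    intro i hi
    obtain ⟨j, hj, rfl⟩ := List.mem_map.mp hi
    exact S.theta_not_mem_Λp (hJ j hj)
  have hBp : S.C J' ∈ Algebra.adjoin ℂ (S.c '' {i | i ∈ S.Λp}) := S.C_mem_plus hJ'
  have h1 : (1 : S.carrier) ∈ Algebra.adjoin ℂ (S.c '' {i | i ∉ S.Λp}) := one_mem _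
  have h1' : (1 : S.carrier) ∈ Algebra.adjoin ℂ (S.c '' {i | i ∈ S.Λp}) := one_mem _
  have hg1 : S.gauge 1 = ((-1:ℂ) ^ (0:ℕ)) • (1 : S.carrier) := by simp
  have hgm : S.gauge (S.C (J.map S.ϑ))
      = ((-1:ℂ) ^ ((J.map S.ϑ).length % 2)) • S.C (J.map S.ϑ) := by
    rw [neg_one_pow_mod_two, S.gauge_C]
  have hgp : S.gauge (S.C J') = ((-1:ℂ) ^ (J'.length % 2)) • S.C J' := by
    rw [neg_one_pow_mod_two, S.gauge_C]
  have hspec := S.twist_spec (S.C (J.map S.ϑ)) 1 1 (S.C J')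
    ((J.map S.ϑ).length % 2) 0 0 (J'.length % 2)
    (by omega) (by omega) (by omega) (by omega)
    hAm h1' h1 hBp hgm hg1 hg1 hgp
  rw [mul_one, one_mul] at hspec
  rw [Θ_C, hspec, ← C_append]
  simp only [List.length_map, Nat.cast_zero, zero_mul, mul_zero, sub_zero]
  rw [← Nat.cast_mul, zpow_natCast]

/-- The trace of a split monomial. -/
lemma Tr_C_split {J J' : List S.Λ} (hJP : J ∈ S.P) (hJ'P : J' ∈ S.P) :
    S.Tr (S.C (J.map S.ϑ ++ J')) = if J = [] ∧ J' = [] then 1 else 0 := by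
  have hb := S.Tr_basis J hJP J' hJ'P
  have he : S.twist (S.Θ (S.C J)) (S.C J')
      = S.ζ ^ ((J.length % 2) * (J'.length % 2)) • S.C (J.map S.ϑ ++ J') :=
    S.E_eq (S.P_sub J hJP) (S.P_sub J' hJ'P)
  rw [show S.Θ ((J.map S.c).prod) = S.Θ (S.C J) from rfl,
    show ((J'.map S.c).prod) = S.C J' from rfl] at hb
  rw [he, map_smul, smul_eq_mul] at hb
  by_cases hc : J = [] ∧ J' = []
  · obtain ⟨rfl, rfl⟩ := hc
    simpa using hb
  · rw [if_neg hc] at hb ⊢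
    exact (mul_eq_zero.mp hb).resolve_left (pow_ne_zero _ S.ζ_ne_zero)

lemma nil_mem_P : ([] : List S.Λ) ∈ S.P := by
  obtain ⟨J, ⟨hJP, hJt⟩, _⟩ := S.P_unique ∅ (Finset.empty_subset _)
  rw [List.toFinset_eq_empty_iff] at hJt
  exact hJt ▸ hJP

lemma Tr_one : S.Tr 1 = 1 := by
  have := S.Tr_C_split S.nil_mem_P S.nil_mem_P
  simpa [C_nil] using this

lemma P_eq_of_toFinset_eq {J K : List S.Λ} (hJ : J ∈ S.P) (hK : K ∈ S.P)
    (h : J.toFinset = K.toFinset) : J = K := by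
  obtain ⟨L, _, hun⟩ := S.P_unique K.toFinset
    (fun i hi => S.P_sub K hK i (List.mem_toFinset.mp hi))
  rw [hun J ⟨hJ, h⟩, hun K ⟨hK, rfl⟩]

/-- Splitting of a reduced word into its minus and plus parts. -/
lemma C_split {X : List S.Λ} (hn : X.Nodup) :
    ∃ (Xm Xp : List S.Λ) (n : ℕ), (Xm ++ Xp).Perm X ∧ (∀ i ∈ Xm, i ∉ S.Λp) ∧
      (∀ i ∈ Xp, i ∈ S.Λp) ∧ S.C X = ((-1:ℂ)^n) • (S.C Xm * S.C Xp) := by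
  induction X with
  | nil => exact ⟨[], [], 0, by simp [C_nil]⟩
  | cons a T ih =>
      obtain ⟨Tm, Tp, n, hperm, hm, hp, hC⟩ := ih (List.nodup_cons.mp hn).2
      by_cases ha : a ∈ S.Λp
      · have hmove : ∀ j ∈ Tm, a ≠ j := fun j hj e => (hm j hj) (e ▸ ha)
        refine ⟨Tm, a :: Tp, n + Tm.length, ?_, hm, ?_, ?_⟩
        · exact List.perm_middle.trans (hperm.cons a)
        · intro i hi
          rcases List.mem_cons.mp hi with rfl | h
          · exact ha
          · exact hp i h
        · rw [C_cons, hC, mul_smul_comm, ← mul_assoc, S.c_move hmove,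
            smul_mul_assoc, mul_assoc, ← C_cons, smul_smul, ← pow_add]
      · refine ⟨a :: Tm, Tp, n, hperm.cons a, ?_, hp, ?_⟩
        · intro i hi
          rcases List.mem_cons.mp hi with rfl | h
          · exact ha
          · exact hm i h
        · rw [C_cons, hC, mul_smul_comm, ← mul_assoc, ← C_cons]

/-- The trace of a reduced monomial. -/
lemma Tr_C_nodup {X : List S.Λ} (hn : X.Nodup) :
    S.Tr (S.C X) = if X = [] then 1 else 0 := by
  rcases eq_or_ne X [] with rfl | hne
  · simpa [C_nil] using S.Tr_one
  rw [if_neg hne]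
  obtain ⟨Xm, Xp, n, hperm, hm, hps, hC⟩ := S.C_split hn
  have hXmXp : (Xm ++ Xp).Nodup := hperm.nodup_iff.mpr hn
  have hXm : Xm.Nodup := (List.nodup_append.mp hXmXp).1
  have hXp : Xp.Nodup := (List.nodup_append.mp hXmXp).2.1
  -- plus side
  obtain ⟨J', hJ'⟩ := (S.P_unique Xp.toFinset
    (fun i hi => hps i (List.mem_toFinset.mp hi))).exists
  have hJ'n : J'.Nodup := S.P_nodup J' hJ'.1
  have hJ'perm : Xp.Perm J' :=
    List.perm_of_nodup_nodup_toFinset_eq hXp hJ'n hJ'.2.symm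
  obtain ⟨k, hk⟩ := S.C_perm hJ'perm hXp
  -- minus side
  have hϑinj : Function.Injective S.ϑ := S.ϑ_invol.injective
  set Y := Xm.map S.ϑ with hY
  have hYn : Y.Nodup := hXm.map hϑinj
  have hYsub : ∀ i ∈ Y, i ∈ S.Λp := by
    intro i hi
    obtain ⟨j, hj, rfl⟩ := List.mem_map.mp hi
    exact S.theta_mem_Λp (hm j hj)
  obtain ⟨J, hJ⟩ := (S.P_unique Y.toFinset
    (fun i hi => hYsub i (List.mem_toFinset.mp hi))).exists
  have hJn : J.Nodup := S.P_nodup J hJ.1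
  have hJperm : (J.map S.ϑ).Perm Xm := by
    have h1 : J.Perm Y := List.perm_of_nodup_nodup_toFinset_eq hJn hYn hJ.2
    have h2 : (J.map S.ϑ).Perm (Y.map S.ϑ) := h1.map S.ϑ
    have h3 : Y.map S.ϑ = Xm := by
      rw [hY, List.map_map]
      have : S.ϑ ∘ S.ϑ = id := funext S.ϑ_invol
      rw [this, List.map_id]
    rwa [h3] at h2
  obtain ⟨m, hmeq⟩ := S.C_perm hJperm.symm hXm
  -- combine
  have hTr : S.Tr (S.C X)
      = ((-1:ℂ)^n * ((-1:ℂ)^m * (-1:ℂ)^k)) * S.Tr (S.C (J.map S.ϑ ++ J')) := by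
    rw [hC, hmeq, hk, C_append, map_smul, smul_eq_mul]
    rw [smul_mul_assoc, mul_smul_comm, map_smul, map_smul, smul_eq_mul, smul_eq_mul]
    ring
  rw [hTr, S.Tr_C_split hJ.1 hJ'.1]
  have hnotboth : ¬ (J = [] ∧ J' = []) := by
    rintro ⟨rfl, rfl⟩
    have hXmnil : Xm = [] := ((by simpa using hJperm : ([] : List S.Λ).Perm Xm)).nil_eq.symm
    have hXpnil : Xp = [] := hJ'perm.symm.nil_eq.symm
    apply hne
    have := hperm.symm
    rw [hXmnil, hXpnil] at hperm
    simpa using hperm.nil_eq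
  rw [if_neg hnotboth, mul_zero]

end MajoranaSetting
namespace MajoranaSetting

variable (S : MajoranaSetting)

/-- The reduced monomials span `𝔄`. -/
lemma mem_span_monomials (x : S.carrier) :
    x ∈ Submodule.span ℂ {y : S.carrier | ∃ K : List S.Λ, K.Nodup ∧ y = S.C K} := by
  have hsub : (Set.range fun p : {J // J ∈ S.P} × {J // J ∈ S.P} =>
      S.twist (S.Θ ((p.1.1.map S.c).prod)) ((p.2.1.map S.c).prod))
      ⊆ (Submodule.span ℂ {y : S.carrier | ∃ K : List S.Λ, K.Nodup ∧ y = S.C K} : Set _) := by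
    rintro y ⟨p, rfl⟩
    obtain ⟨⟨J, hJ⟩, ⟨J', hJ'⟩⟩ := p
    simp only
    rw [show S.Θ ((J.map S.c).prod) = S.Θ (S.C J) from rfl,
      show ((J'.map S.c).prod) = S.C J' from rfl,
      S.E_eq (S.P_sub J hJ) (S.P_sub J' hJ')]
    refine Submodule.smul_mem _ _ (Submodule.subset_span ?_)
    refine ⟨J.map S.ϑ ++ J', ?_, rfl⟩
    rw [List.nodup_append]
    refine ⟨(S.P_nodup J hJ).map S.ϑ_invol.injective, S.P_nodup J' hJ', ?_⟩
    intro i hi i' hi' e; subst e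
    obtain ⟨j, hj, rfl⟩ := List.mem_map.mp hi
    exact S.theta_not_mem_Λp (S.P_sub J hJ j hj) (S.P_sub J' hJ' _ hi')
  exact Submodule.span_le.mpr hsub (S.basis_span x)

lemma c_move' {i : S.Λ} {U : List S.Λ} (h : ∀ j ∈ U, i ≠ j) :
    S.C U * S.c i = ((-1:ℂ) ^ U.length) • (S.c i * S.C U) := by
  rw [S.c_move h, smul_smul, ← pow_add, Even.neg_one_pow ⟨U.length, rfl⟩, one_smul]

lemma c_mul_C_middle {a : S.Λ} {U V : List S.Λ} (h : ∀ j ∈ U, a ≠ j) :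
    S.c a * S.C (U ++ a :: V) = ((-1:ℂ)^U.length) • S.C (U ++ V) := by
  rw [C_append, C_cons, ← mul_assoc, S.c_move h, smul_mul_assoc,
    mul_assoc, ← mul_assoc (S.c a), S.c_sq, one_mul, ← C_append]

lemma C_middle_mul_c {a : S.Λ} {U V : List S.Λ} (h : ∀ j ∈ V, a ≠ j) :
    S.C (U ++ a :: V) * S.c a = ((-1:ℂ)^V.length) • S.C (U ++ V) := by
  rw [C_append, C_cons, mul_assoc, mul_assoc, S.c_move' h, mul_smul_comm,
    mul_smul_comm, ← mul_assoc (S.c a), S.c_sq, one_mul, ← C_append]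

/-- Commuting a single Majorana through the trace. -/
lemma Tr_c_comm (i : S.Λ) (x : S.carrier) : S.Tr (S.c i * x) = S.Tr (x * S.c i) := by
  induction (S.mem_span_monomials x) using Submodule.span_induction with
  | mem y hy =>
      obtain ⟨K, hK, rfl⟩ := hy
      by_cases hiK : i ∈ K
      · obtain ⟨U, V, rfl⟩ := List.append_of_mem hiK
        rw [List.nodup_append] at hK
        obtain ⟨hU, hAV, hdis⟩ := hK
        have hiV := List.nodup_cons.mp hAV
        have hiU : ∀ j ∈ U, i ≠ j := fun j hj e => hdis j hj i (by simp) e.symm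
        have hiV' : ∀ j ∈ V, i ≠ j := fun j hj e => hiV.1 (e ▸ hj)
        have hUV : (U ++ V).Nodup := by
          rw [List.nodup_append]
          exact ⟨hU, hiV.2, fun y hy y' hy' => hdis y hy y' (by simp [hy'])⟩
        rw [S.c_mul_C_middle hiU, S.C_middle_mul_c hiV', map_smul, map_smul]
        rcases eq_or_ne (U ++ V) [] with he | he
        · have hU0 : U = [] := by
            rcases List.append_eq_nil_iff.mp he with ⟨h1, h2⟩; exact h1
          have hV0 : V = [] := by
            rcases List.append_eq_nil_iff.mp he with ⟨h1, h2⟩; exact h2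
          rw [hU0, hV0]
        · rw [S.Tr_C_nodup hUV, if_neg he, smul_zero, smul_zero]
      · have hiK' : ∀ j ∈ K, i ≠ j := fun j hj e => hiK (e ▸ hj)
        have h1 : S.c i * S.C K = ((-1:ℂ)^K.length) • (S.C K * S.c i) := S.c_move hiK'
        have h2 : S.C K * S.c i = S.C (K ++ [i]) := by
          rw [C_append]; simp [C_cons, C_nil]
        have hnd : (K ++ [i]).Nodup := by
          rw [List.nodup_append]
          exact ⟨hK, List.nodup_singleton i,
            fun y hy y' hy' e => hiK (by rw [List.mem_singleton] at hy'; subst hy'; subst e; exact hy)⟩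
        rw [h1, h2, map_smul, S.Tr_C_nodup hnd, if_neg (by simp), smul_zero]
  | zero => simp
  | add y z _ _ hy hz =>
      rw [mul_add, add_mul, map_add, map_add, hy, hz]
  | smul a y _ hy =>
      rw [mul_smul_comm, smul_mul_assoc, map_smul, map_smul, hy]

/-- `Tr` is tracial. -/
lemma Tr_mul_comm (A B : S.carrier) : S.Tr (A * B) = S.Tr (B * A) := by
  have key : ∀ (K : List S.Λ) (A : S.carrier),
      S.Tr (A * S.C K) = S.Tr (S.C K * A) := by
    intro K
    induction K with
    | nil => intro A; rw [C_nil, mul_one, one_mul]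
    | cons i T ih =>
        intro A
        rw [C_cons]
        calc S.Tr (A * (S.c i * S.C T)) = S.Tr ((A * S.c i) * S.C T) := by
              rw [mul_assoc]
          _ = S.Tr (S.C T * (A * S.c i)) := ih _
          _ = S.Tr ((S.C T * A) * S.c i) := by rw [mul_assoc]
          _ = S.Tr (S.c i * (S.C T * A)) := (S.Tr_c_comm i _).symm
          _ = S.Tr ((S.c i * S.C T) * A) := by rw [mul_assoc]
  induction (S.mem_span_monomials B) using Submodule.span_induction with
  | mem y hy => obtain ⟨K, _, rfl⟩ := hy; exact key K A
  | zero => simp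
  | add y z _ _ hy hz => rw [mul_add, add_mul, map_add, map_add, hy, hz]
  | smul a y _ hy => rw [mul_smul_comm, smul_mul_assoc, map_smul, map_smul, hy]

/-- `Tr` is reflection invariant. -/
lemma Tr_theta (A : S.carrier) : S.Tr (S.Θ A) = (starRingEnd ℂ) (S.Tr A) := by
  have Θ_zero : S.Θ 0 = 0 := by
    have := S.Θ_smul 0 0
    simpa using this
  induction (S.mem_span_monomials A) using Submodule.span_induction with
  | mem y hy =>
      obtain ⟨K, hK, rfl⟩ := hy
      rw [Θ_C, S.Tr_C_nodup hK, S.Tr_C_nodup (hK.map S.ϑ_invol.injective)]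
      rcases eq_or_ne K [] with rfl | hne
      · simp
      · rw [if_neg hne, if_neg (by simpa using hne)]
        simp
  | zero => simp [Θ_zero]
  | add y z _ _ hy hz => simp only [S.Θ_add, map_add, hy, hz]
  | smul a y _ hy =>
      rw [S.Θ_smul, map_smul, hy, map_smul, smul_eq_mul, smul_eq_mul, map_mul]

lemma Theta_mem_Aplus {x : S.carrier} (hx : x ∈ S.Aminus) : S.Θ x ∈ S.Aplus := by
  induction hx using Algebra.adjoin_induction with
  | mem y hy =>
      obtain ⟨i, hi, rfl⟩ := hy
      rw [S.Θ_c]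
      exact Algebra.subset_adjoin ⟨S.ϑ i, S.theta_mem_Λp hi, rfl⟩
  | algebraMap z =>
      have : (algebraMap ℂ S.carrier) z = z • 1 := by
        rw [Algebra.algebraMap_eq_smul_one]
      rw [this, S.Θ_smul, S.Θ_one]
      exact Subalgebra.smul_mem _ (one_mem _) _
  | add y z _ _ hy hz => rw [S.Θ_add]; exact add_mem hy hz
  | mul y z _ _ hy hz => rw [S.Θ_mul]; exact mul_mem hy hz

/-- `Tr` factorizes across the reflection plane. -/
lemma Tr_factor {Am : S.carrier} (hAm : Am ∈ S.Aminus) {Ap : S.carrier}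
    (hAp : Ap ∈ S.Aplus) : S.Tr (Am * Ap) = S.Tr Am * S.Tr Ap := by
  have base : ∀ J ∈ S.P, ∀ J' ∈ S.P,
      S.Tr (S.C (J.map S.ϑ) * S.C J') = S.Tr (S.C (J.map S.ϑ)) * S.Tr (S.C J') := by
    intro J hJ J' hJ'
    have h1 : S.Tr (S.C (J.map S.ϑ) * S.C J') = if J = [] ∧ J' = [] then 1 else 0 := by
      rw [← C_append]; exact S.Tr_C_split hJ hJ'
    have h2 : S.Tr (S.C (J.map S.ϑ)) = if J = [] then 1 else 0 := by
      have := S.Tr_C_split hJ S.nil_mem_P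
      simpa [C_nil] using this
    have h3 : S.Tr (S.C J') = if J' = [] then 1 else 0 := by
      have := S.Tr_C_split S.nil_mem_P hJ'
      simpa [C_nil] using this
    rw [h1, h2, h3]
    by_cases hc1 : J = [] <;> by_cases hc2 : J' = [] <;> simp [hc1, hc2]
  -- step 1 : fix minus side a monomial, span over plus side
  have step1' : ∀ J ∈ S.P, ∀ y ∈ Submodule.span ℂ
      (Set.range fun J' : {J // J ∈ S.P} => ((J'.1.map S.c).prod)),
      S.Tr (S.C (J.map S.ϑ) * y) = S.Tr (S.C (J.map S.ϑ)) * S.Tr y := by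
    intro J hJ y hy
    induction hy using Submodule.span_induction with
    | mem z hz =>
        obtain ⟨⟨J', hJ'⟩, rfl⟩ := hz
        exact base J hJ J' hJ'
    | zero => simp
    | add u v _ _ hu hv => rw [mul_add, map_add, map_add, mul_add, hu, hv]
    | smul a u _ hu =>
        rw [mul_smul_comm, map_smul, map_smul, smul_eq_mul, smul_eq_mul, hu]; ring
  have step1 : ∀ J ∈ S.P, ∀ y ∈ S.Aplus,
      S.Tr (S.C (J.map S.ϑ) * y) = S.Tr (S.C (J.map S.ϑ)) * S.Tr y :=
    fun J hJ y hy => step1' J hJ y (S.plus_span y hy)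
  -- step 2 : span over minus side
  have hΘAm : S.Θ Am ∈ S.Aplus := S.Theta_mem_Aplus hAm
  have key' : ∀ y ∈ Submodule.span ℂ
      (Set.range fun J' : {J // J ∈ S.P} => ((J'.1.map S.c).prod)),
      S.Tr (S.Θ y * Ap) = S.Tr (S.Θ y) * S.Tr Ap := by
    intro y hy
    induction hy using Submodule.span_induction with
    | mem z hz =>
        obtain ⟨⟨J, hJ⟩, rfl⟩ := hz
        rw [show S.Θ ((J.map S.c).prod) = S.Θ (S.C J) from rfl, Θ_C]
        exact step1 J hJ Ap hAp
    | zero =>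
        have Θ_zero : S.Θ 0 = 0 := by simpa using S.Θ_smul 0 0
        simp [Θ_zero]
    | add u v _ _ hu hv => rw [S.Θ_add, add_mul, map_add, map_add, add_mul, hu, hv]
    | smul a u _ hu =>
        rw [S.Θ_smul, smul_mul_assoc, map_smul, map_smul, smul_eq_mul, smul_eq_mul, hu]
        ring
  have := key' (S.Θ Am) (S.plus_span _ hΘAm)
  rwa [S.Θ_invol] at this

end MajoranaSetting
namespace MajoranaSetting

variable (S : MajoranaSetting)

lemma JJ'_nodup {J J' : List S.Λ} (hJ : J ∈ S.P) (hJ' : J' ∈ S.P) :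
    (J.map S.ϑ ++ J').Nodup := by
  rw [List.nodup_append]
  refine ⟨(S.P_nodup J hJ).map S.ϑ_invol.injective, S.P_nodup J' hJ', ?_⟩
  intro i hi i' hi' e; subst e
  obtain ⟨j, hj, rfl⟩ := List.mem_map.mp hi
  exact S.theta_not_mem_Λp (S.P_sub J hJ j hj) (S.P_sub J' hJ' _ hi')

lemma split_eq {J J' K K' : List S.Λ} (hJ : J ∈ S.P) (hJ' : J' ∈ S.P)
    (hK : K ∈ S.P) (hK' : K' ∈ S.P)
    (h : (J.map S.ϑ ++ J').toFinset = (K.map S.ϑ ++ K').toFinset) :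
    J = K ∧ J' = K' := by
  have h' : ∀ i, i ∈ (J.map S.ϑ ++ J') ↔ i ∈ (K.map S.ϑ ++ K') := fun i => by
    rw [← List.mem_toFinset, h, List.mem_toFinset]
  have plus_dir : ∀ (A A' B B' : List S.Λ), A ∈ S.P → A' ∈ S.P → B ∈ S.P → B' ∈ S.P →
      (∀ i, i ∈ (A.map S.ϑ ++ A') ↔ i ∈ (B.map S.ϑ ++ B')) →
      ∀ i ∈ A', i ∈ B' := by
    intro A A' B B' hA hA' hB hB' hiff i hi
    rcases List.mem_append.mp ((hiff i).mp (List.mem_append.mpr (Or.inr hi))) with hm | hp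
    · exfalso
      obtain ⟨j, hj, rfl⟩ := List.mem_map.mp hm
      exact S.theta_not_mem_Λp (S.P_sub B hB j hj) (S.P_sub A' hA' _ hi)
    · exact hp
  have minus_dir : ∀ (A A' B B' : List S.Λ), A ∈ S.P → A' ∈ S.P → B ∈ S.P → B' ∈ S.P →
      (∀ i, i ∈ (A.map S.ϑ ++ A') ↔ i ∈ (B.map S.ϑ ++ B')) →
      ∀ i ∈ A, i ∈ B := by
    intro A A' B B' hA hA' hB hB' hiff i hi
    have hmem : S.ϑ i ∈ A.map S.ϑ := List.mem_map.mpr ⟨i, hi, rfl⟩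
    rcases List.mem_append.mp ((hiff (S.ϑ i)).mp (List.mem_append.mpr (Or.inl hmem)))
      with hm | hp
    · obtain ⟨j, hj, he⟩ := List.mem_map.mp hm
      exact (S.ϑ_invol.injective he) ▸ hj
    · exfalso
      exact S.theta_not_mem_Λp (S.P_sub A hA i hi) (S.P_sub B' hB' _ hp)
  constructor
  · apply S.P_eq_of_toFinset_eq hJ hK
    ext i
    simp only [List.mem_toFinset]
    exact ⟨minus_dir J J' K K' hJ hJ' hK hK' h' i,
      minus_dir K K' J J' hK hK' hJ hJ' (fun i => (h' i).symm) i⟩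
  · apply S.P_eq_of_toFinset_eq hJ' hK'
    ext i
    simp only [List.mem_toFinset]
    exact ⟨plus_dir J J' K K' hJ hJ' hK hK' h' i,
      plus_dir K K' J J' hK hK' hJ hJ' (fun i => (h' i).symm) i⟩

/-- Orthonormality of the basis monomials. -/
lemma Tr_star_E (p q : {J // J ∈ S.P} × {J // J ∈ S.P}) :
    S.Tr (star (S.twist (S.Θ ((p.1.1.map S.c).prod)) ((p.2.1.map S.c).prod)) *
      S.twist (S.Θ ((q.1.1.map S.c).prod)) ((q.2.1.map S.c).prod))
      = if p = q then 1 else 0 := by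
  obtain ⟨⟨J, hJ⟩, ⟨J', hJ'⟩⟩ := p
  obtain ⟨⟨K, hK⟩, ⟨K', hK'⟩⟩ := q
  have hep : S.twist (S.Θ ((J.map S.c).prod)) ((J'.map S.c).prod)
      = S.ζ ^ ((J.length % 2) * (J'.length % 2)) • S.C (J.map S.ϑ ++ J') :=
    S.E_eq (S.P_sub J hJ) (S.P_sub J' hJ')
  have heq : S.twist (S.Θ ((K.map S.c).prod)) ((K'.map S.c).prod)
      = S.ζ ^ ((K.length % 2) * (K'.length % 2)) • S.C (K.map S.ϑ ++ K') :=
    S.E_eq (S.P_sub K hK) (S.P_sub K' hK')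
  rw [hep, heq, star_smul, star_C, smul_mul_assoc, mul_smul_comm, smul_smul,
    map_smul, smul_eq_mul]
  by_cases hpq : J = K ∧ J' = K'
  · obtain ⟨rfl, rfl⟩ := hpq
    rw [C_rev_mul_C, S.Tr_one, mul_one, if_pos (by simp)]
    rw [star_pow, ← mul_pow, ← starRingEnd_apply, S.conj_ζ_mul_ζ, one_pow]
  · rw [if_neg (by simp only [Prod.mk.injEq, Subtype.mk.injEq]; exact fun h => hpq h)]
    have hfne : (J.map S.ϑ ++ J').toFinset ≠ (K.map S.ϑ ++ K').toFinset :=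
      fun h => hpq (S.split_eq hJ hJ' hK hK' h)
    have hex : ∃ i, ¬ (i ∈ (J.map S.ϑ ++ J') ↔ i ∈ (K.map S.ϑ ++ K')) := by
      by_contra hcon
      push_neg at hcon
      exact hfne (by ext i; rw [List.mem_toFinset, List.mem_toFinset]; exact hcon i)
    obtain ⟨i, hi⟩ := hex
    rw [← C_append]
    obtain ⟨n, W', hnd, hCeq, hcnt⟩ := S.C_reduce ((J.map S.ϑ ++ J').reverse ++ (K.map S.ϑ ++ K'))
    have hiW : i ∈ W' := by
      rw [hcnt i, List.count_append, List.count_reverse]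
      have h1 := S.JJ'_nodup hJ hJ'
      have h2 := S.JJ'_nodup hK hK'
      by_cases hi1 : i ∈ (J.map S.ϑ ++ J') <;> by_cases hi2 : i ∈ (K.map S.ϑ ++ K')
      · exact absurd (iff_of_true hi1 hi2) hi
      · rw [List.count_eq_one_of_mem h1 hi1, List.count_eq_zero_of_not_mem hi2]
        omega
      · rw [List.count_eq_zero_of_not_mem hi1, List.count_eq_one_of_mem h2 hi2]
        omega
      · exact absurd (iff_of_false hi1 hi2) hi
    rw [hCeq, map_smul, S.Tr_C_nodup hnd, if_neg (List.ne_nil_of_mem hiW), smul_zero,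
      mul_zero]

/-- `Tr` is a faithful state. -/
lemma Tr_pos (A : S.carrier) :
    0 ≤ S.Tr (star A * A) ∧ (S.Tr (star A * A) = 0 → A = 0) := by
  obtain ⟨r, hr⟩ := Submodule.mem_span_range_iff_exists_fun ℂ |>.mp (S.basis_span A)
  set f := fun p : {J // J ∈ S.P} × {J // J ∈ S.P} =>
    S.twist (S.Θ ((p.1.1.map S.c).prod)) ((p.2.1.map S.c).prod) with hf
  have expand : star A * A
      = ∑ p, ∑ q, ((starRingEnd ℂ) (r p) * r q) • (star (f p) * f q) := by
    rw [← hr, star_sum, Finset.sum_mul_sum]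
    simp_rw [star_smul, smul_mul_assoc, mul_smul_comm, smul_smul, starRingEnd_apply]
    rfl
  have hTr : S.Tr (star A * A) = ∑ p, (starRingEnd ℂ) (r p) * r p := by
    rw [expand, map_sum]
    simp_rw [map_sum, map_smul, hf, S.Tr_star_E, smul_eq_mul]
    refine Finset.sum_congr rfl fun p _ => ?_
    simp_rw [mul_ite, mul_one, mul_zero]
    rw [Finset.sum_ite_eq]
    simp
  have hconj : ∀ z : ℂ, (starRingEnd ℂ) z * z = ((Complex.normSq z : ℝ) : ℂ) := by
    intro z
    rw [mul_comm, Complex.mul_conj]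
  have hTr2 : S.Tr (star A * A) = ((∑ p, Complex.normSq (r p) : ℝ) : ℂ) := by
    rw [hTr]
    simp_rw [hconj]
    push_cast
    ring
  constructor
  · rw [hTr2]
    exact Complex.zero_le_real.mpr (Finset.sum_nonneg fun p _ => Complex.normSq_nonneg _)
  · intro h0
    rw [hTr2, Complex.ofReal_eq_zero] at h0
    have hall : ∀ p ∈ Finset.univ, Complex.normSq (r p) = 0 :=
      (Finset.sum_eq_zero_iff_of_nonneg fun p _ => Complex.normSq_nonneg _).mp h0
    have hr0 : ∀ p, r p = 0 := fun p =>
      Complex.normSq_eq_zero.mp (hall p (Finset.mem_univ p))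
    rw [← hr]
    exact Finset.sum_eq_zero fun p _ => by rw [hr0 p, zero_smul]

end MajoranaSetting

/-- `Tr` is a tracial, factorizing, reflection-invariant state. -/
theorem trace_properties (S : MajoranaSetting) :
    (S.Tr 1 = 1) ∧
    (∀ A : S.carrier, 0 ≤ S.Tr (star A * A) ∧ (S.Tr (star A * A) = 0 → A = 0)) ∧
    (∀ A B : S.carrier, S.Tr (A * B) = S.Tr (B * A)) ∧
    (∀ A : S.carrier, S.Tr (S.Θ A) = starRingEnd ℂ (S.Tr A)) ∧
    (∀ Am ∈ S.Aminus, ∀ Ap ∈ S.Aplus, S.Tr (Am * Ap) = S.Tr Am * S.Tr Ap) := by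
  exact ⟨S.Tr_one, S.Tr_pos, S.Tr_mul_comm, S.Tr_theta,
    fun Am hAm Ap hAp => S.Tr_factor hAm hAp⟩
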